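/- Let x₁, x₂, x₃, x₁₂, x₁₃, x₂₃, x₁₂₃ be real numbers. There exists a probability measure P on the finite sample space {0,1}³ (with all subsets measurable) such that, writing Eᵢ := {ω ∈ {0,1}³ : ωᵢ = 1}, one has P(Eᵢ) = xᵢ for i = 1,2,3, P(Eᵢ ∩ Eⱼ) = x_{ij} for 1 ≤ i < j ≤ 3, and P(E₁ ∩ E₂ ∩ E₃) = x₁₂₃, if and only if all of the following hold: 0 ≤ xᵢ ≤ 1 for i = 1,2,3; max{x₁+x₂−1, x₁₃+x₂₃−x₃, 0} ≤ x₁₂ ≤ min{x₁, x₂}; max{x₁+x₃−1, x₁₂+x₂₃−x₂, 0} ≤ x₁₃ ≤ min{x₁, x₃}; max{x₂+x₃−1, x₁₂+x₁₃−x₁, 0} ≤ x₂₃ ≤ min{x₂, x₃}; 1−x₁−x₂−x₃+x₁₂+x₁₃+x₂₃ ≥ 0; max{0, x₁₂+x₁₃−x₁, x₁₂+x₂₃−x₂, x₁₃+x₂₃−x₃} ≤ x₁₂₃ ≤ min{x₁₂, x₁₃, x₂₃, 1−x₁−x₂−x₃+x₁₂+x₁₃+x₂₃}. -/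
import Mathlib


open MeasureTheory

/-- Weight function on `{0,1}³` realizing the prescribed marginals. -/
def wt (x₁ x₂ x₃ x₁₂ x₁₃ x₂₃ x₁₂₃ : ℝ) : (Fin 3 → Bool) → ℝ := fun g =>
  cond (g 0)
    (cond (g 1) (cond (g 2) x₁₂₃ (x₁₂ - x₁₂₃))
      (cond (g 2) (x₁₃ - x₁₂₃) (x₁ - x₁₂ - x₁₃ + x₁₂₃)))
    (cond (g 1) (cond (g 2) (x₂₃ - x₁₂₃) (x₂ - x₁₂ - x₂₃ + x₁₂₃))
      (cond (g 2) (x₃ - x₁₃ - x₂₃ + x₁₂₃)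
        (1 - x₁ - x₂ - x₃ + x₁₂ + x₁₃ + x₂₃ - x₁₂₃)))

lemma meas_key (P : Measure (Fin 3 → Bool)) (S : Set (Fin 3 → Bool)) [DecidablePred (· ∈ S)] :
    P S = ∑ f ∈ Finset.univ.filter (· ∈ S), P {f} := by
  rw [← measure_biUnion_finset]
  · congr 1; ext g; simp
  · intro i _ j _ hij
    simp [Set.disjoint_singleton, Function.onFun, hij]
  · intro i _; exact measurableSet_singleton i

lemma meas_expand (P : Measure (Fin 3 → Bool)) [IsFiniteMeasure P] (S : Set (Fin 3 → Bool))
    [DecidablePred (· ∈ S)] (F : Finset (Fin 3 → Bool))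
    (hF : Finset.univ.filter (· ∈ S) = F) :
    (P S).toReal = ∑ f ∈ F, (P {f}).toReal := by
  rw [meas_key, hF, ENNReal.toReal_sum]
  intro f _; exact measure_ne_top P _

theorem stmt5 (x₁ x₂ x₃ x₁₂ x₁₃ x₂₃ x₁₂₃ : ℝ) :
    (∃ P : Measure (Fin 3 → Bool), IsProbabilityMeasure P ∧
      (P {ω | ω 0 = true}).toReal = x₁ ∧
      (P {ω | ω 1 = true}).toReal = x₂ ∧
      (P {ω | ω 2 = true}).toReal = x₃ ∧
      (P ({ω | ω 0 = true} ∩ {ω | ω 1 = true})).toReal = x₁₂ ∧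
      (P ({ω | ω 0 = true} ∩ {ω | ω 2 = true})).toReal = x₁₃ ∧
      (P ({ω | ω 1 = true} ∩ {ω | ω 2 = true})).toReal = x₂₃ ∧
      (P ({ω | ω 0 = true} ∩ {ω | ω 1 = true} ∩ {ω | ω 2 = true})).toReal = x₁₂₃) ↔
    ((0 ≤ x₁ ∧ x₁ ≤ 1) ∧ (0 ≤ x₂ ∧ x₂ ≤ 1) ∧ (0 ≤ x₃ ∧ x₃ ≤ 1) ∧
      (max (max (x₁ + x₂ - 1) (x₁₃ + x₂₃ - x₃)) 0 ≤ x₁₂ ∧ x₁₂ ≤ min x₁ x₂) ∧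
      (max (max (x₁ + x₃ - 1) (x₁₂ + x₂₃ - x₂)) 0 ≤ x₁₃ ∧ x₁₃ ≤ min x₁ x₃) ∧
      (max (max (x₂ + x₃ - 1) (x₁₂ + x₁₃ - x₁)) 0 ≤ x₂₃ ∧ x₂₃ ≤ min x₂ x₃) ∧
      1 - x₁ - x₂ - x₃ + x₁₂ + x₁₃ + x₂₃ ≥ 0 ∧
      max (max (max 0 (x₁₂ + x₁₃ - x₁)) (x₁₂ + x₂₃ - x₂)) (x₁₃ + x₂₃ - x₃) ≤ x₁₂₃ ∧
      x₁₂₃ ≤ min (min (min x₁₂ x₁₃) x₂₃) (1 - x₁ - x₂ - x₃ + x₁₂ + x₁₃ + x₂₃)) := by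
  constructor
  · rintro ⟨P, hP, h1, h2, h3, h12, h13, h23, h123⟩
    haveI := hP
    replace h12 : (P {ω : Fin 3 → Bool | ω 0 = true ∧ ω 1 = true}).toReal = x₁₂ := h12
    replace h13 : (P {ω : Fin 3 → Bool | ω 0 = true ∧ ω 2 = true}).toReal = x₁₃ := h13
    replace h23 : (P {ω : Fin 3 → Bool | ω 1 = true ∧ ω 2 = true}).toReal = x₂₃ := h23
    replace h123 : (P {ω : Fin 3 → Bool | (ω 0 = true ∧ ω 1 = true) ∧ ω 2 = true}).toReal = x₁₂₃ := h123
    have n1 : (0:ℝ) ≤ (P {![true,true,true]}).toReal := ENNReal.toReal_nonneg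
    have n2 : (0:ℝ) ≤ (P {![true,true,false]}).toReal := ENNReal.toReal_nonneg
    have n3 : (0:ℝ) ≤ (P {![true,false,true]}).toReal := ENNReal.toReal_nonneg
    have n4 : (0:ℝ) ≤ (P {![true,false,false]}).toReal := ENNReal.toReal_nonneg
    have n5 : (0:ℝ) ≤ (P {![false,true,true]}).toReal := ENNReal.toReal_nonneg
    have n6 : (0:ℝ) ≤ (P {![false,true,false]}).toReal := ENNReal.toReal_nonneg
    have n7 : (0:ℝ) ≤ (P {![false,false,true]}).toReal := ENNReal.toReal_nonneg
    have n8 : (0:ℝ) ≤ (P {![false,false,false]}).toReal := ENNReal.toReal_nonneg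
    have E1 := meas_expand P {ω : Fin 3 → Bool | ω 0 = true}
      {![true,true,true], ![true,true,false], ![true,false,true], ![true,false,false]} (by decide)
    rw [Finset.sum_insert (by decide), Finset.sum_insert (by decide),
      Finset.sum_insert (by decide), Finset.sum_singleton] at E1
    have E2 := meas_expand P {ω : Fin 3 → Bool | ω 1 = true}
      {![true,true,true], ![true,true,false], ![false,true,true], ![false,true,false]} (by decide)
    rw [Finset.sum_insert (by decide), Finset.sum_insert (by decide),
      Finset.sum_insert (by decide), Finset.sum_singleton] at E2
    have E3 := meas_expand P {ω : Fin 3 → Bool | ω 2 = true}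
      {![true,true,true], ![true,false,true], ![false,true,true], ![false,false,true]} (by decide)
    rw [Finset.sum_insert (by decide), Finset.sum_insert (by decide),
      Finset.sum_insert (by decide), Finset.sum_singleton] at E3
    have E12 := meas_expand P {ω : Fin 3 → Bool | ω 0 = true ∧ ω 1 = true}
      {![true,true,true], ![true,true,false]} (by decide)
    rw [Finset.sum_insert (by decide), Finset.sum_singleton] at E12
    have E13 := meas_expand P {ω : Fin 3 → Bool | ω 0 = true ∧ ω 2 = true}
      {![true,true,true], ![true,false,true]} (by decide)
    rw [Finset.sum_insert (by decide), Finset.sum_singleton] at E13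
    have E23 := meas_expand P {ω : Fin 3 → Bool | ω 1 = true ∧ ω 2 = true}
      {![true,true,true], ![false,true,true]} (by decide)
    rw [Finset.sum_insert (by decide), Finset.sum_singleton] at E23
    have E123 := meas_expand P {ω : Fin 3 → Bool | (ω 0 = true ∧ ω 1 = true) ∧ ω 2 = true}
      {![true,true,true]} (by decide)
    rw [Finset.sum_singleton] at E123
    have EU := meas_expand P {ω : Fin 3 → Bool | True}
      {![true,true,true], ![true,true,false], ![true,false,true], ![true,false,false],
       ![false,true,true], ![false,true,false], ![false,false,true], ![false,false,false]}
      (by decide)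
    rw [Finset.sum_insert (by decide), Finset.sum_insert (by decide), Finset.sum_insert (by decide),
      Finset.sum_insert (by decide), Finset.sum_insert (by decide), Finset.sum_insert (by decide),
      Finset.sum_insert (by decide), Finset.sum_singleton] at EU
    rw [show {ω : Fin 3 → Bool | True} = Set.univ from rfl, measure_univ, ENNReal.toReal_one] at EU
    simp only [max_le_iff, le_min_iff, ge_iff_le]
    repeat' apply And.intro
    all_goals linarith
  · intro h
    simp only [max_le_iff, le_min_iff, ge_iff_le] at h
    obtain ⟨⟨hx1a, hx1b⟩, ⟨hx2a, hx2b⟩, ⟨hx3a, hx3b⟩,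
      ⟨⟨⟨h12a, h12b⟩, h12c⟩, h12d, h12e⟩,
      ⟨⟨⟨h13a, h13b⟩, h13c⟩, h13d, h13e⟩,
      ⟨⟨⟨h23a, h23b⟩, h23c⟩, h23d, h23e⟩,
      hsum, ⟨⟨⟨hA, hB⟩, hC⟩, hD⟩, ⟨⟨⟨hE, hF⟩, hG⟩, hH⟩⟩ := h
    set P : Measure (Fin 3 → Bool) :=
      ∑ f : Fin 3 → Bool, (ENNReal.ofReal (wt x₁ x₂ x₃ x₁₂ x₁₃ x₂₃ x₁₂₃ f)) • Measure.dirac f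
      with hPdef
    have hsing : ∀ g : Fin 3 → Bool, P {g} = ENNReal.ofReal (wt x₁ x₂ x₃ x₁₂ x₁₃ x₂₃ x₁₂₃ g) := by
      intro g
      rw [hPdef, Measure.finset_sum_apply]
      simp only [Measure.smul_apply, Measure.dirac_apply, Set.indicator_apply,
        Set.mem_singleton_iff, smul_eq_mul, mul_ite, mul_one, mul_zero, Pi.one_apply]
      rw [Finset.sum_ite_eq' Finset.univ g (fun f => ENNReal.ofReal (wt x₁ x₂ x₃ x₁₂ x₁₃ x₂₃ x₁₂₃ f))]
      simp
    have w1 : wt x₁ x₂ x₃ x₁₂ x₁₃ x₂₃ x₁₂₃ ![true,true,true] = x₁₂₃ := rfl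
    have w2 : wt x₁ x₂ x₃ x₁₂ x₁₃ x₂₃ x₁₂₃ ![true,true,false] = x₁₂ - x₁₂₃ := rfl
    have w3 : wt x₁ x₂ x₃ x₁₂ x₁₃ x₂₃ x₁₂₃ ![true,false,true] = x₁₃ - x₁₂₃ := rfl
    have w4 : wt x₁ x₂ x₃ x₁₂ x₁₃ x₂₃ x₁₂₃ ![true,false,false] = x₁ - x₁₂ - x₁₃ + x₁₂₃ := rfl
    have w5 : wt x₁ x₂ x₃ x₁₂ x₁₃ x₂₃ x₁₂₃ ![false,true,true] = x₂₃ - x₁₂₃ := rfl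
    have w6 : wt x₁ x₂ x₃ x₁₂ x₁₃ x₂₃ x₁₂₃ ![false,true,false] = x₂ - x₁₂ - x₂₃ + x₁₂₃ := rfl
    have w7 : wt x₁ x₂ x₃ x₁₂ x₁₃ x₂₃ x₁₂₃ ![false,false,true] = x₃ - x₁₃ - x₂₃ + x₁₂₃ := rfl
    have w8 : wt x₁ x₂ x₃ x₁₂ x₁₃ x₂₃ x₁₂₃ ![false,false,false] =
        1 - x₁ - x₂ - x₃ + x₁₂ + x₁₃ + x₂₃ - x₁₂₃ := rfl
    have g1 : (0:ℝ) ≤ x₁₂₃ := by linarith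
    have g2 : (0:ℝ) ≤ x₁₂ - x₁₂₃ := by linarith
    have g3 : (0:ℝ) ≤ x₁₃ - x₁₂₃ := by linarith
    have g4 : (0:ℝ) ≤ x₁ - x₁₂ - x₁₃ + x₁₂₃ := by linarith
    have g5 : (0:ℝ) ≤ x₂₃ - x₁₂₃ := by linarith
    have g6 : (0:ℝ) ≤ x₂ - x₁₂ - x₂₃ + x₁₂₃ := by linarith
    have g7 : (0:ℝ) ≤ x₃ - x₁₃ - x₂₃ + x₁₂₃ := by linarith
    have g8 : (0:ℝ) ≤ 1 - x₁ - x₂ - x₃ + x₁₂ + x₁₃ + x₂₃ - x₁₂₃ := by linarith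
    have hu : P Set.univ = 1 := by
      rw [show (Set.univ : Set (Fin 3 → Bool)) = {ω : Fin 3 → Bool | True} from rfl,
        meas_key P {ω : Fin 3 → Bool | True}]
      rw [show Finset.univ.filter (· ∈ ({ω : Fin 3 → Bool | True} : Set (Fin 3 → Bool))) =
        ({![true,true,true], ![true,true,false], ![true,false,true], ![true,false,false],
          ![false,true,true], ![false,true,false], ![false,false,true], ![false,false,false]} :
          Finset (Fin 3 → Bool)) from by decide]
      rw [Finset.sum_insert (by decide), Finset.sum_insert (by decide),
        Finset.sum_insert (by decide), Finset.sum_insert (by decide),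
        Finset.sum_insert (by decide), Finset.sum_insert (by decide),
        Finset.sum_insert (by decide), Finset.sum_singleton]
      simp only [hsing, w1, w2, w3, w4, w5, w6, w7, w8]
      rw [← ENNReal.ofReal_add g7 g8, ← ENNReal.ofReal_add g6 (by linarith),
        ← ENNReal.ofReal_add g5 (by linarith), ← ENNReal.ofReal_add g4 (by linarith),
        ← ENNReal.ofReal_add g3 (by linarith), ← ENNReal.ofReal_add g2 (by linarith),
        ← ENNReal.ofReal_add g1 (by linarith), ← ENNReal.ofReal_one]
      congr 1
      ring
    have hprob : IsProbabilityMeasure P := ⟨hu⟩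
    haveI := hprob
    have p1 : (P {![true,true,true]}).toReal = x₁₂₃ := by
      rw [hsing, w1]; exact ENNReal.toReal_ofReal g1
    have p2 : (P {![true,true,false]}).toReal = x₁₂ - x₁₂₃ := by
      rw [hsing, w2]; exact ENNReal.toReal_ofReal g2
    have p3 : (P {![true,false,true]}).toReal = x₁₃ - x₁₂₃ := by
      rw [hsing, w3]; exact ENNReal.toReal_ofReal g3
    have p4 : (P {![true,false,false]}).toReal = x₁ - x₁₂ - x₁₃ + x₁₂₃ := by
      rw [hsing, w4]; exact ENNReal.toReal_ofReal g4
    have p5 : (P {![false,true,true]}).toReal = x₂₃ - x₁₂₃ := by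
      rw [hsing, w5]; exact ENNReal.toReal_ofReal g5
    have p6 : (P {![false,true,false]}).toReal = x₂ - x₁₂ - x₂₃ + x₁₂₃ := by
      rw [hsing, w6]; exact ENNReal.toReal_ofReal g6
    have p7 : (P {![false,false,true]}).toReal = x₃ - x₁₃ - x₂₃ + x₁₂₃ := by
      rw [hsing, w7]; exact ENNReal.toReal_ofReal g7
    have e1 : (P {ω : Fin 3 → Bool | ω 0 = true}).toReal = x₁ := by
      have E := meas_expand P {ω : Fin 3 → Bool | ω 0 = true}
        {![true,true,true], ![true,true,false], ![true,false,true], ![true,false,false]} (by decide)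
      rw [Finset.sum_insert (by decide), Finset.sum_insert (by decide),
        Finset.sum_insert (by decide), Finset.sum_singleton, p1, p2, p3, p4] at E
      rw [E]; ring
    have e2 : (P {ω : Fin 3 → Bool | ω 1 = true}).toReal = x₂ := by
      have E := meas_expand P {ω : Fin 3 → Bool | ω 1 = true}
        {![true,true,true], ![true,true,false], ![false,true,true], ![false,true,false]} (by decide)
      rw [Finset.sum_insert (by decide), Finset.sum_insert (by decide),
        Finset.sum_insert (by decide), Finset.sum_singleton, p1, p2, p5, p6] at E
      rw [E]; ring
    have e3 : (P {ω : Fin 3 → Bool | ω 2 = true}).toReal = x₃ := by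
      have E := meas_expand P {ω : Fin 3 → Bool | ω 2 = true}
        {![true,true,true], ![true,false,true], ![false,true,true], ![false,false,true]} (by decide)
      rw [Finset.sum_insert (by decide), Finset.sum_insert (by decide),
        Finset.sum_insert (by decide), Finset.sum_singleton, p1, p3, p5, p7] at E
      rw [E]; ring
    have e12 : (P {ω : Fin 3 → Bool | ω 0 = true ∧ ω 1 = true}).toReal = x₁₂ := by
      have E := meas_expand P {ω : Fin 3 → Bool | ω 0 = true ∧ ω 1 = true}
        {![true,true,true], ![true,true,false]} (by decide)
      rw [Finset.sum_insert (by decide), Finset.sum_singleton, p1, p2] at E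
      rw [E]; ring
    have e13 : (P {ω : Fin 3 → Bool | ω 0 = true ∧ ω 2 = true}).toReal = x₁₃ := by
      have E := meas_expand P {ω : Fin 3 → Bool | ω 0 = true ∧ ω 2 = true}
        {![true,true,true], ![true,false,true]} (by decide)
      rw [Finset.sum_insert (by decide), Finset.sum_singleton, p1, p3] at E
      rw [E]; ring
    have e23 : (P {ω : Fin 3 → Bool | ω 1 = true ∧ ω 2 = true}).toReal = x₂₃ := by
      have E := meas_expand P {ω : Fin 3 → Bool | ω 1 = true ∧ ω 2 = true}
        {![true,true,true], ![false,true,true]} (by decide)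
      rw [Finset.sum_insert (by decide), Finset.sum_singleton, p1, p5] at E
      rw [E]; ring
    have e123 : (P {ω : Fin 3 → Bool | (ω 0 = true ∧ ω 1 = true) ∧ ω 2 = true}).toReal = x₁₂₃ := by
      have E := meas_expand P {ω : Fin 3 → Bool | (ω 0 = true ∧ ω 1 = true) ∧ ω 2 = true}
        {![true,true,true]} (by decide)
      rw [Finset.sum_singleton, p1] at E
      exact E
    exact ⟨P, hprob, e1, e2, e3, e12, e13, e23, e123⟩
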